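/- arXiv:2003.01086 — 2 statements merged into one kernel-verified Lean document; each statement's English description precedes it below -/
import Mathlib

section
/- Let X, Y, A, B be nonempty finite types, let p be a strictly positive probability mass function on X × Y, and let e : X → A and f : Y → B. Let r(a|b) be the conditional pmf of a = e(x) given b = f(y) under the pushforward of p, and define the model q(y|x) = p_Y(y)·r(e(x)|f(y)) / Σ_{y'} p_Y(y')·r(e(x)|f(y')). Then the predictive loss of q equals the mutual information gap: Σ_x p_X(x) · KL(p(·|x) ‖ q(·|x)) = I(X;Y) − I(e(X); f(Y)). -/
/-!
Statement 2: For a strictly positive pmf `p` on `X × Y`, maps `e : X → A` and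
`f : Y → B`, with `r(a|b)` the conditional pmf of `a = e x` given `b = f y`
under the pushforward of `p`, the model
`q(y|x) = p_Y(y)·r(e x | f y) / ∑_{y'} p_Y(y')·r(e x | f y')` has predictive
loss equal to the mutual information gap:
`∑_x p_X(x) · KL(p(·|x) ‖ q(·|x)) = I(X;Y) − I(e(X); f(Y))`.
-/

open Finset
open scoped Classical

noncomputable section

variable {X Y A B : Type*} [Fintype X] [Fintype Y] [Fintype A] [Fintype B]

/-- Marginal of the first coordinate. -/
def margX (p : X × Y → ℝ) (x : X) : ℝ := ∑ y, p (x, y)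

/-- Marginal of the second coordinate. -/
def margY (p : X × Y → ℝ) (y : Y) : ℝ := ∑ x, p (x, y)

/-- Conditional pmf of `y` given `x`. -/
def condYX (p : X × Y → ℝ) (y : Y) (x : X) : ℝ := p (x, y) / margX p x

/-- KL divergence between two pmfs on a finite type. -/
def klPmf (f g : Y → ℝ) : ℝ := ∑ y, f y * Real.log (f y / g y)

/-- Mutual information between the two coordinates of a pmf on a product of
finite types (terms with zero mass contribute `0`, since `Real.log 0 = 0`). -/
def mutualInfo (p : X × Y → ℝ) : ℝ :=
  ∑ x, ∑ y, p (x, y) * Real.log (p (x, y) / (margX p x * margY p y))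

/-- Pushforward pmf of `p` under `(x, y) ↦ (e x, f y)`. -/
def pushPmf (p : X × Y → ℝ) (e : X → A) (f : Y → B) : A × B → ℝ :=
  fun ab => ∑ x, ∑ y, if e x = ab.1 ∧ f y = ab.2 then p (x, y) else 0

/-- Conditional pmf of `a = e a` given `b = f y` under the pushforward of `p`. -/
def condPush (p : X × Y → ℝ) (e : X → A) (f : Y → B) (a : A) (b : B) : ℝ :=
  pushPmf p e f (a, b) / ∑ a', pushPmf p e f (a', b)

/-- The model `q(y|x) ∝ p_Y(y)·r(e x | f y)`. -/
def qOpt (p : X × Y → ℝ) (e : X → A) (f : Y → B) (y : Y) (x : X) : ℝ :=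
  margY p y * condPush p e f (e x) (f y) /
    ∑ y', margY p y' * condPush p e f (e x) (f y')


section aux

lemma sum_rot {α β γ : Type*} [Fintype α] [Fintype β] [Fintype γ] (F : α → β → γ → ℝ) :
    ∑ a, ∑ x, ∑ y, F a x y = ∑ x, ∑ y, ∑ a, F a x y := by
  rw [Finset.sum_comm]
  exact Finset.sum_congr rfl fun x _ => Finset.sum_comm

lemma myMargX_pos [Nonempty Y] (p : X × Y → ℝ) (hpos : ∀ xy, 0 < p xy) (x : X) :
    0 < margX p x := Finset.sum_pos (fun y _ => hpos _) Finset.univ_nonempty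

lemma myMargY_pos [Nonempty X] (p : X × Y → ℝ) (hpos : ∀ xy, 0 < p xy) (y : Y) :
    0 < margY p y := Finset.sum_pos (fun x _ => hpos _) Finset.univ_nonempty

lemma push_nonneg (p : X × Y → ℝ) (hpos : ∀ xy, 0 < p xy) (e : X → A) (f : Y → B)
    (ab : A × B) : 0 ≤ pushPmf p e f ab := by
  refine Finset.sum_nonneg fun x _ => Finset.sum_nonneg fun y _ => ?_
  split_ifs with h
  · exact (hpos _).le
  · exact le_rfl

lemma push_pos (p : X × Y → ℝ) (hpos : ∀ xy, 0 < p xy) (e : X → A) (f : Y → B)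
    (x : X) (y : Y) : 0 < pushPmf p e f (e x, f y) := by
  refine Finset.sum_pos' (fun x' _ => Finset.sum_nonneg fun y' _ => ?_)
    ⟨x, Finset.mem_univ x, Finset.sum_pos' (fun y' _ => ?_)
      ⟨y, Finset.mem_univ y, by simpa using hpos (x, y)⟩⟩
  · split_ifs with h
    · exact (hpos _).le
    · exact le_rfl
  · split_ifs with h
    · exact (hpos _).le
    · exact le_rfl

lemma push_margY (p : X × Y → ℝ) (e : X → A) (f : Y → B) (b : B) :
    margY (pushPmf p e f) b = ∑ y, if f y = b then margY p y else 0 := by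
  unfold margY pushPmf
  rw [sum_rot]
  rw [Finset.sum_comm]
  refine Finset.sum_congr rfl fun y _ => ?_
  simp only [ite_and]
  by_cases h : f y = b
  · simp [h]
  · simp [h]

lemma push_margX (p : X × Y → ℝ) (e : X → A) (f : Y → B) (a : A) :
    margX (pushPmf p e f) a = ∑ x, if e x = a then margX p x else 0 := by
  unfold margX pushPmf
  rw [sum_rot]
  refine Finset.sum_congr rfl fun x _ => ?_
  simp only [ite_and]
  by_cases h : e x = a
  · simp [h, margX]
  · simp [h]

lemma push_margY_pos [Nonempty X] (p : X × Y → ℝ) (hpos : ∀ xy, 0 < p xy)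
    (e : X → A) (f : Y → B) (y : Y) : 0 < margY (pushPmf p e f) (f y) := by
  rw [push_margY]
  refine Finset.sum_pos' (fun y' _ => ?_) ⟨y, Finset.mem_univ y, by
    simpa using (myMargY_pos p hpos y)⟩
  split_ifs with h
  · exact (myMargY_pos p hpos _).le
  · exact le_rfl

lemma push_margX_pos [Nonempty Y] (p : X × Y → ℝ) (hpos : ∀ xy, 0 < p xy)
    (e : X → A) (f : Y → B) (x : X) : 0 < margX (pushPmf p e f) (e x) := by
  rw [push_margX]
  refine Finset.sum_pos' (fun x' _ => ?_) ⟨x, Finset.mem_univ x, by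
    simpa using (myMargX_pos p hpos x)⟩
  split_ifs with h
  · exact (myMargX_pos p hpos _).le
  · exact le_rfl

lemma condPush_eq (p : X × Y → ℝ) (e : X → A) (f : Y → B) (a : A) (b : B) :
    condPush p e f a b = pushPmf p e f (a, b) / margY (pushPmf p e f) b := rfl

lemma push_le_margY (p : X × Y → ℝ) (hpos : ∀ xy, 0 < p xy) (e : X → A) (f : Y → B)
    (a : A) (b : B) : pushPmf p e f (a, b) ≤ margY (pushPmf p e f) b := by
  have : margY (pushPmf p e f) b = ∑ a', pushPmf p e f (a', b) := rfl
  rw [this]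
  exact Finset.single_le_sum (f := fun a' => pushPmf p e f (a', b))
    (fun a' _ => push_nonneg p hpos e f (a', b)) (Finset.mem_univ a)

lemma Z_eq [Nonempty X] (p : X × Y → ℝ) (hpos : ∀ xy, 0 < p xy) (e : X → A) (f : Y → B)
    (x : X) :
    ∑ y', margY p y' * condPush p e f (e x) (f y') = margX (pushPmf p e f) (e x) := by
  have hgroup :
      ∑ y', margY p y' * condPush p e f (e x) (f y')
        = ∑ b, ∑ y', if f y' = b then margY p y' * condPush p e f (e x) b else 0 := by
    rw [Finset.sum_comm]
    refine Finset.sum_congr rfl fun y' _ => ?_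
    simp [Finset.sum_ite_eq]
  rw [hgroup]
  have hmX : margX (pushPmf p e f) (e x) = ∑ b, pushPmf p e f (e x, b) := rfl
  rw [hmX]
  refine Finset.sum_congr rfl fun b _ => ?_
  have h1 : ∀ y', (if f y' = b then margY p y' * condPush p e f (e x) b else 0)
      = condPush p e f (e x) b * (if f y' = b then margY p y' else 0) := by
    intro y'
    split_ifs with h
    · ring
    · ring
  simp only [h1]
  rw [← Finset.mul_sum, ← push_margY p e f b, condPush_eq]
  have hBnn : (0:ℝ) ≤ margY (pushPmf p e f) b :=
    Finset.sum_nonneg fun a' _ => push_nonneg p hpos e f (a', b)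
  rcases hBnn.eq_or_lt with h0 | h0
  · have hz : pushPmf p e f (e x, b) = 0 :=
      le_antisymm ((push_le_margY p hpos e f (e x) b).trans h0.symm.le)
        (push_nonneg p hpos e f _)
    simp [hz]
  · exact div_mul_cancel₀ _ h0.ne'

lemma push_sum (p : X × Y → ℝ) (e : X → A) (f : Y → B) (L : A → B → ℝ) :
    ∑ a, ∑ b, pushPmf p e f (a, b) * L a b = ∑ x, ∑ y, p (x, y) * L (e x) (f y) := by
  unfold pushPmf
  simp only [Finset.sum_mul, ite_mul, zero_mul]
  calc ∑ a, ∑ b, ∑ x, ∑ y, (if e x = a ∧ f y = b then p (x, y) * L a b else 0)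
      = ∑ a, ∑ x, ∑ y, ∑ b, (if e x = a ∧ f y = b then p (x, y) * L a b else 0) :=
        Finset.sum_congr rfl fun a _ => sum_rot _
    _ = ∑ x, ∑ y, ∑ a, ∑ b, (if e x = a ∧ f y = b then p (x, y) * L a b else 0) :=
        sum_rot _
    _ = ∑ x, ∑ y, p (x, y) * L (e x) (f y) := by
        refine Finset.sum_congr rfl fun x _ => Finset.sum_congr rfl fun y _ => ?_
        simp [ite_and, Finset.sum_ite_eq]

end aux

theorem predictive_loss_eq_mutual_information_gap
    [Nonempty X] [Nonempty Y] [Nonempty A] [Nonempty B]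
    (p : X × Y → ℝ) (hpos : ∀ xy, 0 < p xy) (hsum : ∑ xy, p xy = 1)
    (e : X → A) (f : Y → B) :
    ∑ x, margX p x * klPmf (fun y => condYX p y x) (fun y => qOpt p e f y x)
      = mutualInfo p - mutualInfo (pushPmf p e f) := by
  have hpX : ∀ x, 0 < margX p x := myMargX_pos p hpos
  have hpY : ∀ y, 0 < margY p y := myMargY_pos p hpos
  have hπ : ∀ x y, 0 < pushPmf p e f (e x, f y) := push_pos p hpos e f
  have hπA : ∀ x, 0 < margX (pushPmf p e f) (e x) := push_margX_pos p hpos e f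
  have hπB : ∀ y, 0 < margY (pushPmf p e f) (f y) := push_margY_pos p hpos e f
  have key : ∀ x y, Real.log (condYX p y x / qOpt p e f y x)
      = Real.log (p (x, y) / (margX p x * margY p y))
        - Real.log (pushPmf p e f (e x, f y)
            / (margX (pushPmf p e f) (e x) * margY (pushPmf p e f) (f y))) := by
    intro x y
    have h1 : condYX p y x / qOpt p e f y x
        = (p (x, y) / (margX p x * margY p y))
          / (pushPmf p e f (e x, f y)
              / (margX (pushPmf p e f) (e x) * margY (pushPmf p e f) (f y))) := by
      unfold condYX qOpt
      rw [Z_eq p hpos e f x, condPush_eq]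
      field_simp
    have h2 : 0 < p (x, y) / (margX p x * margY p y) :=
      div_pos (hpos (x, y)) (mul_pos (hpX x) (hpY y))
    have h3 : 0 < pushPmf p e f (e x, f y)
        / (margX (pushPmf p e f) (e x) * margY (pushPmf p e f) (f y)) :=
      div_pos (hπ x y) (mul_pos (hπA x) (hπB y))
    rw [h1, Real.log_div h2.ne' h3.ne']
  unfold klPmf
  have step1 : ∀ x, margX p x
        * ∑ y, condYX p y x * Real.log (condYX p y x / qOpt p e f y x)
      = ∑ y, p (x, y) * (Real.log (p (x, y) / (margX p x * margY p y))
          - Real.log (pushPmf p e f (e x, f y)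
              / (margX (pushPmf p e f) (e x) * margY (pushPmf p e f) (f y)))) := by
    intro x
    rw [Finset.mul_sum]
    refine Finset.sum_congr rfl fun y _ => ?_
    rw [key x y]
    unfold condYX
    have hx := (hpX x).ne'
    field_simp
  rw [Finset.sum_congr rfl fun x _ => step1 x]
  have expand : ∀ x, (∑ y, p (x, y) * (Real.log (p (x, y) / (margX p x * margY p y))
          - Real.log (pushPmf p e f (e x, f y)
              / (margX (pushPmf p e f) (e x) * margY (pushPmf p e f) (f y)))))
      = (∑ y, p (x, y) * Real.log (p (x, y) / (margX p x * margY p y)))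
        - ∑ y, p (x, y) * Real.log (pushPmf p e f (e x, f y)
              / (margX (pushPmf p e f) (e x) * margY (pushPmf p e f) (f y))) := by
    intro x
    rw [← Finset.sum_sub_distrib]
    exact Finset.sum_congr rfl fun y _ => by ring
  rw [Finset.sum_congr rfl fun x _ => expand x, Finset.sum_sub_distrib]
  have hMI : mutualInfo p = ∑ x, ∑ y, p (x, y)
      * Real.log (p (x, y) / (margX p x * margY p y)) := rfl
  have hMI2 : mutualInfo (pushPmf p e f)
      = ∑ x, ∑ y, p (x, y) * Real.log (pushPmf p e f (e x, f y)
          / (margX (pushPmf p e f) (e x) * margY (pushPmf p e f) (f y))) := by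
    rw [mutualInfo]
    exact push_sum p e f fun a b => Real.log (pushPmf p e f (a, b)
      / (margX (pushPmf p e f) a * margY (pushPmf p e f) b))
  rw [hMI, hMI2]

end
end

section
/- Let X, U, Z be measurable spaces, and let P be a Markov kernel from X × U to X, Enc a Markov kernel from X to Z, and F a Markov kernel from Z × U to Z. Fix a horizon T ≥ 1, an initial observation x₀ ∈ X, a control sequence u : {0,…,T−1} → U, and a measurable latent cost c̄ : Z × U → ℝ with 0 ≤ c̄ ≤ c_max. Define observation marginals ρ_0 = δ_{x₀}, ρ_{t+1} = ρ_t.bind( x ↦ P(x, u_t) ), and latent-model marginals κ_0 = Enc(x₀), κ_{t+1} = κ_t.bind( z ↦ F(z, u_t) ). Let L_obs = Σ_{t=0}^{T−1} ∫ ( ∫ c̄(z, u_t) d(Enc(x))(z) ) dρ_t(x) and L_lat = Σ_{t=0}^{T−1} ∫ c̄(z, u_t) dκ_t(z). Then, assuming the maps x ↦ tv( (P(x,u_t)).bind(Enc), (Enc(x)).bind( z ↦ F(z,u_t) ) ) are measurable, |L_lat − L_obs| ≤ T · c_max · Σ_{t=0}^{T−1} ∫ tv( (P(x,u_t)).bind(Enc),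 (Enc(x)).bind( z ↦ F(z,u_t) ) ) dρ_t(x). -/
/-!
Statement 11: T-step total-variation bound between the expected cumulative
latent cost along the true observation dynamics (via the encoder) and along
the latent dynamics model.
-/

open MeasureTheory ProbabilityTheory

/-- Total variation distance between two measures:
`sup` over measurable sets `s` of `|μ s − ν s|`. -/
noncomputable def tv {α : Type*} [MeasurableSpace α] (μ ν : Measure α) : ℝ :=
  ⨆ s : {s : Set α // MeasurableSet s}, |(μ s).toReal - (ν s).toReal|

section Aux

open Set

variable {α β : Type*} [MeasurableSpace α] [MeasurableSpace β]

instance : Nonempty {s : Set α // MeasurableSet s} := ⟨⟨∅, MeasurableSet.empty⟩⟩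

lemma tv_bdd (μ ν : Measure α) [IsProbabilityMeasure μ] [IsProbabilityMeasure ν] :
    BddAbove (Set.range fun s : {s : Set α // MeasurableSet s} =>
      |(μ s).toReal - (ν s).toReal|) := by
  refine ⟨1, ?_⟩
  rintro x ⟨s, rfl⟩
  have h1 : (μ s).toReal ≤ 1 := by
    simpa using ENNReal.toReal_mono ENNReal.one_ne_top (prob_le_one (μ := μ) (s := s))
  have h2 : (ν s).toReal ≤ 1 := by
    simpa using ENNReal.toReal_mono ENNReal.one_ne_top (prob_le_one (μ := ν) (s := s))
  have h3 : (0:ℝ) ≤ (μ s).toReal := ENNReal.toReal_nonneg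
  have h4 : (0:ℝ) ≤ (ν s).toReal := ENNReal.toReal_nonneg
  rw [abs_sub_le_iff]; constructor <;> linarith

lemma abs_sub_le_tv (μ ν : Measure α) [IsProbabilityMeasure μ] [IsProbabilityMeasure ν]
    {s : Set α} (hs : MeasurableSet s) :
    |(μ s).toReal - (ν s).toReal| ≤ tv μ ν :=
  le_ciSup (tv_bdd μ ν) ⟨s, hs⟩

lemma tv_nonneg (μ ν : Measure α) [IsProbabilityMeasure μ] [IsProbabilityMeasure ν] :
    0 ≤ tv μ ν := by
  have := abs_sub_le_tv μ ν MeasurableSet.empty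
  simpa using le_trans (abs_nonneg _) this

lemma tv_self (μ : Measure α) : tv μ μ = 0 := by
  have : ∀ s : {s : Set α // MeasurableSet s}, |(μ s).toReal - (μ s).toReal| = 0 := by
    intro s; simp
  simp only [tv, this, ciSup_const]

lemma tv_le_one (μ ν : Measure α) [IsProbabilityMeasure μ] [IsProbabilityMeasure ν] :
    tv μ ν ≤ 1 := by
  apply ciSup_le
  rintro ⟨s, hs⟩
  have h1 : (μ s).toReal ≤ 1 := by
    simpa using ENNReal.toReal_mono ENNReal.one_ne_top (prob_le_one (μ := μ) (s := s))
  have h2 : (ν s).toReal ≤ 1 := by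
    simpa using ENNReal.toReal_mono ENNReal.one_ne_top (prob_le_one (μ := ν) (s := s))
  have h3 : (0:ℝ) ≤ (μ s).toReal := ENNReal.toReal_nonneg
  have h4 : (0:ℝ) ≤ (ν s).toReal := ENNReal.toReal_nonneg
  rw [abs_sub_le_iff]; constructor <;> linarith

lemma tv_triangle (μ ν ξ : Measure α) [IsProbabilityMeasure μ] [IsProbabilityMeasure ν]
    [IsProbabilityMeasure ξ] : tv μ ξ ≤ tv μ ν + tv ν ξ := by
  apply ciSup_le
  rintro ⟨s, hs⟩
  calc |(μ s).toReal - (ξ s).toReal|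
      ≤ |(μ s).toReal - (ν s).toReal| + |(ν s).toReal - (ξ s).toReal| := abs_sub_le _ _ _
    _ ≤ tv μ ν + tv ν ξ := add_le_add (abs_sub_le_tv μ ν hs) (abs_sub_le_tv ν ξ hs)

lemma integrable_of_bdd (μ : Measure α) [IsFiniteMeasure μ] {f : α → ℝ} {M : ℝ}
    (hf : Measurable f) (hb : ∀ a, |f a| ≤ M) : Integrable f μ :=
  Integrable.mono' (integrable_const M) hf.aestronglyMeasurable (ae_of_all _ hb)

lemma meas_antitone (μ : Measure α) {f : α → ℝ} (_hf : Measurable f) :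
    Measurable fun t : ℝ => (μ {a | t ≤ f a}).toReal := by
  apply Measurable.ennreal_toReal
  apply Antitone.measurable
  intro s t hst
  exact measure_mono (fun a ha => le_trans hst ha)

lemma abs_integral_sub_le_tv (μ ν : Measure α) [IsProbabilityMeasure μ] [IsProbabilityMeasure ν]
    {f : α → ℝ} (hf : Measurable f) {M : ℝ}
    (h0 : ∀ a, 0 ≤ f a) (hM : ∀ a, f a ≤ M) :
    |∫ a, f a ∂μ - ∫ a, f a ∂ν| ≤ M * tv μ ν := by
  have hα : Nonempty α := by
    by_contra h
    have huniv : (Set.univ : Set α) = ∅ := Set.univ_eq_empty_iff.mpr (not_nonempty_iff.mp h)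
    have h1 : μ Set.univ = 1 := measure_univ
    rw [huniv] at h1; simp at h1
  have hM0 : 0 ≤ M := le_trans (h0 hα.some) (hM hα.some)
  have hbd : ∀ a, |f a| ≤ M := fun a => by rw [abs_of_nonneg (h0 a)]; exact hM a
  have hIμ : Integrable f μ := integrable_of_bdd μ hf hbd
  have hIν : Integrable f ν := integrable_of_bdd ν hf hbd
  rw [hIμ.integral_eq_integral_Ioc_meas_le (ae_of_all _ h0) (ae_of_all _ hM),
      hIν.integral_eq_integral_Ioc_meas_le (ae_of_all _ h0) (ae_of_all _ hM)]
  set gμ := fun t : ℝ => (μ {a | t ≤ f a}).toReal with hgμ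
  set gν := fun t : ℝ => (ν {a | t ≤ f a}).toReal with hgν
  have hgμI : Integrable gμ (volume.restrict (Ioc 0 M)) :=
    integrable_of_bdd _ (meas_antitone μ hf) (fun t => by
      rw [abs_of_nonneg ENNReal.toReal_nonneg]
      simpa using ENNReal.toReal_mono ENNReal.one_ne_top (prob_le_one (μ := μ)))
  have hgνI : Integrable gν (volume.restrict (Ioc 0 M)) :=
    integrable_of_bdd _ (meas_antitone ν hf) (fun t => by
      rw [abs_of_nonneg ENNReal.toReal_nonneg]
      simpa using ENNReal.toReal_mono ENNReal.one_ne_top (prob_le_one (μ := ν)))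
  change |(∫ t in Ioc 0 M, gμ t) - ∫ t in Ioc 0 M, gν t| ≤ M * tv μ ν
  rw [← integral_sub hgμI hgνI]
  calc |∫ t in Ioc 0 M, (gμ t - gν t)|
      ≤ ∫ t in Ioc 0 M, |gμ t - gν t| := by
        simpa [Real.norm_eq_abs] using
          norm_integral_le_integral_norm (μ := volume.restrict (Ioc 0 M))
            (fun t => gμ t - gν t)
    _ ≤ ∫ _t in Ioc 0 M, tv μ ν := by
        apply integral_mono ((hgμI.sub hgνI).abs) (integrable_const _)
        intro t
        exact abs_sub_le_tv μ ν (measurableSet_le measurable_const hf)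
    _ = M * tv μ ν := by
        rw [setIntegral_const]
        simp [Real.volume_Ioc, ENNReal.toReal_ofReal hM0, smul_eq_mul, hM0]

lemma bind_prob (μ : Measure α) [IsProbabilityMeasure μ] {k : α → Measure β}
    (hk : Measurable k) (hkp : ∀ a, IsProbabilityMeasure (k a)) :
    IsProbabilityMeasure (μ.bind k) := by
  constructor
  rw [Measure.bind_apply MeasurableSet.univ hk.aemeasurable]
  simp [measure_univ]

lemma bind_apply_toReal (μ : Measure α) [IsProbabilityMeasure μ] {k : α → Measure β}
    (hk : Measurable k) (hkp : ∀ a, IsProbabilityMeasure (k a)) {s : Set β}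
    (hs : MeasurableSet s) :
    ((μ.bind k) s).toReal = ∫ a, ((k a) s).toReal ∂μ := by
  rw [Measure.bind_apply hs hk.aemeasurable]
  rw [integral_toReal (f := fun a => (k a) s)
    ((Measure.measurable_coe hs).comp hk).aemeasurable
    (ae_of_all _ fun a => by haveI := hkp a; exact measure_lt_top _ _)]

lemma tv_bind_same_kernel (μ ν : Measure α) [IsProbabilityMeasure μ] [IsProbabilityMeasure ν]
    {k : α → Measure β} (hk : Measurable k) (hkp : ∀ a, IsProbabilityMeasure (k a)) :
    tv (μ.bind k) (ν.bind k) ≤ tv μ ν := by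
  haveI := bind_prob μ hk hkp
  haveI := bind_prob ν hk hkp
  apply ciSup_le
  rintro ⟨s, hs⟩
  rw [bind_apply_toReal μ hk hkp hs, bind_apply_toReal ν hk hkp hs]
  have := abs_integral_sub_le_tv μ ν
    (f := fun a => ((k a) s).toReal)
    (((Measure.measurable_coe hs).comp hk).ennreal_toReal)
    (M := 1)
    (fun a => ENNReal.toReal_nonneg)
    (fun a => by
      haveI := hkp a
      simpa using ENNReal.toReal_mono ENNReal.one_ne_top (prob_le_one (μ := k a)))
  simpa using this

lemma tv_bind_le_integral (μ : Measure α) [IsProbabilityMeasure μ]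
    {k1 k2 : α → Measure β} (hk1 : Measurable k1) (hk2 : Measurable k2)
    (hkp1 : ∀ a, IsProbabilityMeasure (k1 a)) (hkp2 : ∀ a, IsProbabilityMeasure (k2 a))
    (htv : Measurable fun a => tv (k1 a) (k2 a)) :
    tv (μ.bind k1) (μ.bind k2) ≤ ∫ a, tv (k1 a) (k2 a) ∂μ := by
  apply ciSup_le
  rintro ⟨s, hs⟩
  rw [bind_apply_toReal μ hk1 hkp1 hs, bind_apply_toReal μ hk2 hkp2 hs]
  have hI1 : Integrable (fun a => ((k1 a) s).toReal) μ :=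
    integrable_of_bdd μ (((Measure.measurable_coe hs).comp hk1).ennreal_toReal)
      (M := 1) (fun a => by
        haveI := hkp1 a
        rw [abs_of_nonneg ENNReal.toReal_nonneg]
        simpa using ENNReal.toReal_mono ENNReal.one_ne_top (prob_le_one (μ := k1 a)))
  have hI2 : Integrable (fun a => ((k2 a) s).toReal) μ :=
    integrable_of_bdd μ (((Measure.measurable_coe hs).comp hk2).ennreal_toReal)
      (M := 1) (fun a => by
        haveI := hkp2 a
        rw [abs_of_nonneg ENNReal.toReal_nonneg]
        simpa using ENNReal.toReal_mono ENNReal.one_ne_top (prob_le_one (μ := k2 a)))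
  have hItv : Integrable (fun a => tv (k1 a) (k2 a)) μ :=
    integrable_of_bdd μ htv (M := 1) (fun a => by
      haveI := hkp1 a; haveI := hkp2 a
      rw [abs_of_nonneg (tv_nonneg _ _)]
      exact tv_le_one _ _)
  rw [← integral_sub hI1 hI2]
  calc |∫ a, (((k1 a) s).toReal - ((k2 a) s).toReal) ∂μ|
      ≤ ∫ a, |((k1 a) s).toReal - ((k2 a) s).toReal| ∂μ := by
        simpa [Real.norm_eq_abs] using norm_integral_le_integral_norm (μ := μ)
          (fun a => ((k1 a) s).toReal - ((k2 a) s).toReal)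
    _ ≤ ∫ a, tv (k1 a) (k2 a) ∂μ := by
        apply integral_mono ((hI1.sub hI2).abs) hItv
        intro a
        haveI := hkp1 a; haveI := hkp2 a
        exact abs_sub_le_tv _ _ hs

lemma integral_bind' (μ : Measure α) [IsProbabilityMeasure μ] {k : α → Measure β}
    (hk : Measurable k) (hkp : ∀ a, IsProbabilityMeasure (k a))
    {f : β → ℝ} (hf : Measurable f) {M : ℝ} (h0 : ∀ b, 0 ≤ f b) (hM : ∀ b, f b ≤ M) :
    ∫ b, f b ∂(μ.bind k) = ∫ a, ∫ b, f b ∂(k a) ∂μ := by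
  haveI := bind_prob μ hk hkp
  have hfo : Measurable fun b => ENNReal.ofReal (f b) := hf.ennreal_ofReal
  have hin : ∀ a : α, ∫ b, f b ∂(k a) = (∫⁻ b, ENNReal.ofReal (f b) ∂(k a)).toReal := by
    intro a
    exact integral_eq_lintegral_of_nonneg_ae (ae_of_all _ h0) hf.aestronglyMeasurable
  have hGm : Measurable fun a => ∫⁻ b, ENNReal.ofReal (f b) ∂(k a) :=
    (Measure.measurable_lintegral hfo).comp hk
  have hGfin : ∀ a, (∫⁻ b, ENNReal.ofReal (f b) ∂(k a)) < ⊤ := by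
    intro a
    haveI := hkp a
    calc ∫⁻ b, ENNReal.ofReal (f b) ∂(k a)
        ≤ ∫⁻ _b, ENNReal.ofReal M ∂(k a) :=
          lintegral_mono (fun b => ENNReal.ofReal_le_ofReal (hM b))
      _ = ENNReal.ofReal M := by simp [measure_univ]
      _ < ⊤ := ENNReal.ofReal_lt_top
  rw [integral_eq_lintegral_of_nonneg_ae (ae_of_all _ h0) hf.aestronglyMeasurable,
      Measure.lintegral_bind hk.aemeasurable hfo.aemeasurable]
  simp_rw [hin]
  rw [integral_toReal hGm.aemeasurable (ae_of_all _ hGfin)]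

end Aux

theorem cost_gap_le_tv_consistency
    {X U Z : Type*} [MeasurableSpace X] [MeasurableSpace U] [MeasurableSpace Z]
    (P : Kernel (X × U) X) [IsMarkovKernel P]
    (Enc : Kernel X Z) [IsMarkovKernel Enc]
    (F : Kernel (Z × U) Z) [IsMarkovKernel F]
    (T : ℕ) (hT : 1 ≤ T) (x₀ : X) (u : ℕ → U)
    (cbar : Z × U → ℝ) (hc_meas : Measurable cbar) (cmax : ℝ)
    (hc_nonneg : ∀ zu, 0 ≤ cbar zu) (hc_le : ∀ zu, cbar zu ≤ cmax)
    -- observation marginals under the true dynamics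
    (ρ : ℕ → Measure X) (hρ0 : ρ 0 = Measure.dirac x₀)
    (hρ : ∀ t, ρ (t + 1) = (ρ t).bind fun x => P (x, u t))
    -- latent-model marginals
    (κ : ℕ → Measure Z) (hκ0 : κ 0 = Enc x₀)
    (hκ : ∀ t, κ (t + 1) = (κ t).bind fun z => F (z, u t))
    (htv_meas : ∀ t, Measurable fun x =>
      tv ((P (x, u t)).bind fun x' => Enc x') ((Enc x).bind fun z => F (z, u t))) :
    |(∑ t ∈ Finset.range T, ∫ z, cbar (z, u t) ∂(κ t))
        - ∑ t ∈ Finset.range T, ∫ x, (∫ z, cbar (z, u t) ∂(Enc x)) ∂(ρ t)|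
      ≤ (T : ℝ) * cmax * ∑ t ∈ Finset.range T,
          ∫ x, tv ((P (x, u t)).bind fun x' => Enc x')
            ((Enc x).bind fun z => F (z, u t)) ∂(ρ t) := by
  -- measurability facts
  have mEnc : Measurable fun x : X => Enc x := Enc.measurable
  have mP : ∀ t, Measurable fun x : X => P (x, u t) := fun t =>
    P.measurable.comp (measurable_id.prodMk measurable_const)
  have mF : ∀ t, Measurable fun z : Z => F (z, u t) := fun t =>
    F.measurable.comp (measurable_id.prodMk measurable_const)
  have mPE : ∀ t, Measurable fun x : X => (P (x, u t)).bind fun x' => Enc x' := fun t =>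
    (Measure.measurable_bind' mEnc).comp (mP t)
  have mEF : ∀ t, Measurable fun x : X => (Enc x).bind fun z => F (z, u t) := fun t =>
    (Measure.measurable_bind' (mF t)).comp mEnc
  -- probability instances
  have hρp : ∀ t, IsProbabilityMeasure (ρ t) := by
    intro t
    induction t with
    | zero => rw [hρ0]; infer_instance
    | succ t ih =>
        rw [hρ t]
        exact bind_prob (ρ t) (mP t) (fun x => inferInstance)
  have hκp : ∀ t, IsProbabilityMeasure (κ t) := by
    intro t
    induction t with
    | zero => rw [hκ0]; infer_instance
    | succ t ih =>
        haveI := ih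
        rw [hκ t]
        exact bind_prob (κ t) (mF t) (fun z => inferInstance)
  have hPEp : ∀ t (x : X), IsProbabilityMeasure ((P (x, u t)).bind fun x' => Enc x') :=
    fun t x => bind_prob _ mEnc (fun x' => inferInstance)
  have hEFp : ∀ t (x : X), IsProbabilityMeasure ((Enc x).bind fun z => F (z, u t)) :=
    fun t x => bind_prob _ (mF t) (fun z => inferInstance)
  -- encoded observation marginals
  set ν : ℕ → Measure Z := fun t => (ρ t).bind fun x => Enc x with hν
  have hνp : ∀ t, IsProbabilityMeasure (ν t) := by
    intro t
    haveI := hρp t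
    exact bind_prob (ρ t) mEnc (fun x => inferInstance)
  -- per-step tv error
  set ε : ℕ → ℝ := fun t =>
    ∫ x, tv ((P (x, u t)).bind fun x' => Enc x')
      ((Enc x).bind fun z => F (z, u t)) ∂(ρ t) with hε
  have hε0 : ∀ t, 0 ≤ ε t := by
    intro t
    apply integral_nonneg
    intro x
    haveI := hPEp t x
    haveI := hEFp t x
    exact tv_nonneg _ _
  -- key recursion
  have gap : ∀ t, tv (κ t) (ν t) ≤ ∑ s ∈ Finset.range t, ε s := by
    intro t
    induction t with
    | zero =>
        have : ν 0 = Enc x₀ := by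
          simp only [hν, hρ0]
          exact Measure.dirac_bind mEnc x₀
        rw [hκ0, this, tv_self]
        simp
    | succ t ih =>
        haveI := hκp t
        haveI := hνp t
        haveI := hρp t
        haveI := hκp (t + 1)
        haveI := hνp (t + 1)
        haveI : IsProbabilityMeasure ((ν t).bind fun z => F (z, u t)) :=
          bind_prob (ν t) (mF t) (fun z => inferInstance)
        have hmid : (ν t).bind (fun z => F (z, u t))
            = (ρ t).bind fun x => (Enc x).bind fun z => F (z, u t) :=
          Measure.bind_bind mEnc.aemeasurable (mF t).aemeasurable
        have hν1 : ν (t + 1) = (ρ t).bind fun x => (P (x, u t)).bind fun x' => Enc x' := by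
          simp only [hν, hρ t]
          exact Measure.bind_bind (mP t).aemeasurable mEnc.aemeasurable
        have h1 : tv (κ (t + 1)) ((ν t).bind fun z => F (z, u t)) ≤ tv (κ t) (ν t) := by
          rw [hκ t]
          exact tv_bind_same_kernel (κ t) (ν t) (mF t) (fun z => inferInstance)
        have h2 : tv ((ν t).bind fun z => F (z, u t)) (ν (t + 1)) ≤ ε t := by
          rw [hmid, hν1, hε]
          have := tv_bind_le_integral (ρ t) (mEF t) (mPE t)
            (hEFp t) (hPEp t) ?_
          · calc tv ((ρ t).bind fun x => (Enc x).bind fun z => F (z, u t))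
                  ((ρ t).bind fun x => (P (x, u t)).bind fun x' => Enc x')
                ≤ ∫ x, tv ((Enc x).bind fun z => F (z, u t))
                    ((P (x, u t)).bind fun x' => Enc x') ∂(ρ t) := this
              _ = ∫ x, tv ((P (x, u t)).bind fun x' => Enc x')
                    ((Enc x).bind fun z => F (z, u t)) ∂(ρ t) := by
                  congr 1
                  funext x
                  haveI := hPEp t x
                  haveI := hEFp t x
                  unfold tv
                  congr 1
                  funext s
                  rw [abs_sub_comm]
          · -- measurability of swapped tv
            have : (fun x => tv ((Enc x).bind fun z => F (z, u t))
                ((P (x, u t)).bind fun x' => Enc x'))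
                = fun x => tv ((P (x, u t)).bind fun x' => Enc x')
                    ((Enc x).bind fun z => F (z, u t)) := by
              funext x
              unfold tv
              congr 1
              funext s
              rw [abs_sub_comm]
            rw [this]
            exact htv_meas t
        calc tv (κ (t + 1)) (ν (t + 1))
            ≤ tv (κ (t + 1)) ((ν t).bind fun z => F (z, u t))
              + tv ((ν t).bind fun z => F (z, u t)) (ν (t + 1)) := tv_triangle _ _ _
          _ ≤ tv (κ t) (ν t) + ε t := add_le_add h1 h2
          _ ≤ (∑ s ∈ Finset.range t, ε s) + ε t := add_le_add ih le_rfl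
          _ = ∑ s ∈ Finset.range (t + 1), ε s := (Finset.sum_range_succ ε t).symm
  -- nonemptiness of Z and nonnegativity of cmax
  have hZ : Nonempty Z := by
    by_contra h
    haveI := hκp 0
    have huniv : (Set.univ : Set Z) = ∅ := Set.univ_eq_empty_iff.mpr (not_nonempty_iff.mp h)
    have h1 : (κ 0) Set.univ = 1 := measure_univ
    rw [huniv] at h1; simp at h1
  have hcmax0 : 0 ≤ cmax := le_trans (hc_nonneg (hZ.some, u 0)) (hc_le (hZ.some, u 0))
  set S : ℝ := ∑ t ∈ Finset.range T, ε t with hS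
  have hS0 : 0 ≤ S := Finset.sum_nonneg (fun t _ => hε0 t)
  -- per-term cost gap bound
  have hterm : ∀ t, t < T →
      |∫ z, cbar (z, u t) ∂(κ t) - ∫ x, (∫ z, cbar (z, u t) ∂(Enc x)) ∂(ρ t)|
        ≤ cmax * S := by
    intro t ht
    haveI := hρp t
    haveI := hκp t
    haveI := hνp t
    have mc : Measurable fun z : Z => cbar (z, u t) :=
      hc_meas.comp (measurable_id.prodMk measurable_const)
    have hb : ∫ x, (∫ z, cbar (z, u t) ∂(Enc x)) ∂(ρ t) = ∫ z, cbar (z, u t) ∂(ν t) :=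
      (integral_bind' (ρ t) mEnc (fun x => inferInstance) mc (M := cmax)
        (fun z => hc_nonneg _) (fun z => hc_le _)).symm
    rw [hb]
    calc |∫ z, cbar (z, u t) ∂(κ t) - ∫ z, cbar (z, u t) ∂(ν t)|
        ≤ cmax * tv (κ t) (ν t) :=
          abs_integral_sub_le_tv (κ t) (ν t) mc (fun z => hc_nonneg _) (fun z => hc_le _)
      _ ≤ cmax * S := by
          apply mul_le_mul_of_nonneg_left _ hcmax0
          calc tv (κ t) (ν t) ≤ ∑ s ∈ Finset.range t, ε s := gap t
            _ ≤ S := Finset.sum_le_sum_of_subset_of_nonneg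
                (Finset.range_subset_range.mpr ht.le) (fun s _ _ => hε0 s)
  -- assemble
  calc |(∑ t ∈ Finset.range T, ∫ z, cbar (z, u t) ∂(κ t))
          - ∑ t ∈ Finset.range T, ∫ x, (∫ z, cbar (z, u t) ∂(Enc x)) ∂(ρ t)|
      = |∑ t ∈ Finset.range T, (∫ z, cbar (z, u t) ∂(κ t)
          - ∫ x, (∫ z, cbar (z, u t) ∂(Enc x)) ∂(ρ t))| := by
        rw [Finset.sum_sub_distrib]
    _ ≤ ∑ t ∈ Finset.range T, |∫ z, cbar (z, u t) ∂(κ t)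
          - ∫ x, (∫ z, cbar (z, u t) ∂(Enc x)) ∂(ρ t)| := Finset.abs_sum_le_sum_abs _ _
    _ ≤ ∑ _t ∈ Finset.range T, cmax * S :=
        Finset.sum_le_sum (fun t ht => hterm t (Finset.mem_range.mp ht))
    _ = (T : ℝ) * cmax * S := by
        rw [Finset.sum_const, Finset.card_range, nsmul_eq_mul, mul_assoc]
end
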